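/- Let P ∈ ℝ^{n×k}, u ∈ ℝ^k, ε ≥ 0 and λ ≥ 0. If there do NOT exist v, r ∈ ℝ^n with ‖v‖_∞ ≤ λ, ‖r‖₂ ≤ ε, and P u = v + r, then the function w ↦ ε‖w‖₂ + λ‖w‖₁ − (P u)ᵀ w is unbounded below on ℝ^n. -/

import Mathlib

open Matrix Pointwise

/-- Euclidean norm of a vector in `ℝ^n`. -/
noncomputable def norm2 {n : ℕ} (x : Fin n → ℝ) : ℝ := Real.sqrt (∑ i, x i ^ 2)

/-- ℓ1 norm of a vector in `ℝ^n`. -/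
noncomputable def norm1 {n : ℕ} (x : Fin n → ℝ) : ℝ := ∑ i, |x i|

/-- Sup (ℓ∞) norm of a vector in `ℝ^n`. -/
noncomputable def normInf {n : ℕ} (x : Fin n → ℝ) : ℝ := ⨆ i, |x i|

lemma norm2_smul' {n : ℕ} (t : ℝ) (w : Fin n → ℝ) :
    norm2 (t • w) = |t| * norm2 w := by
  unfold norm2
  rw [← Real.sqrt_sq_eq_abs, ← Real.sqrt_mul (sq_nonneg t), Finset.mul_sum]
  congr 1
  apply Finset.sum_congr rfl
  intro i _
  simp [Pi.smul_apply, smul_eq_mul, mul_pow]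

lemma norm1_smul' {n : ℕ} (t : ℝ) (w : Fin n → ℝ) :
    norm1 (t • w) = |t| * norm1 w := by
  unfold norm1
  rw [Finset.mul_sum]
  apply Finset.sum_congr rfl
  intro i _
  simp [abs_mul]

lemma norm2_eq_euclid {n : ℕ} (x : Fin n → ℝ) :
    norm2 x = ‖(EuclideanSpace.equiv (Fin n) ℝ).symm x‖ := by
  rw [EuclideanSpace.norm_eq]
  unfold norm2
  congr 1
  apply Finset.sum_congr rfl
  intro i _
  simp [Real.norm_eq_abs, sq_abs]

lemma norm2_nonneg {n : ℕ} (x : Fin n → ℝ) : 0 ≤ norm2 x := Real.sqrt_nonneg _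

/-- If there is no decomposition `Pu = v + r` with `‖v‖_∞ ≤ λ` and `‖r‖₂ ≤ ε`, then
`w ↦ ε‖w‖₂ + λ‖w‖₁ − (Pu)ᵀw` is unbounded below. -/
theorem dual_function_f2_unbounded
    {n k : ℕ} (P : Matrix (Fin n) (Fin k) ℝ) (u : Fin k → ℝ)
    (ε lam : ℝ) (hε : 0 ≤ ε) (hlam : 0 ≤ lam)
    (hinfeas : ¬ ∃ v r : Fin n → ℝ, normInf v ≤ lam ∧ norm2 r ≤ ε ∧ P.mulVec u = v + r) :
    ∀ M : ℝ, ∃ w : Fin n → ℝ,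
      ε * norm2 w + lam * norm1 w - P.mulVec u ⬝ᵥ w < M := by
  classical
  intro M
  set c : Fin n → ℝ := P.mulVec u with hc
  set A : Set (Fin n → ℝ) := Metric.closedBall 0 lam with hA
  set e : EuclideanSpace ℝ (Fin n) ≃L[ℝ] (Fin n → ℝ) := EuclideanSpace.equiv (Fin n) ℝ with he
  set B : Set (Fin n → ℝ) := e '' (Metric.closedBall 0 ε) with hB
  have hBmem : ∀ x : Fin n → ℝ, x ∈ B ↔ norm2 x ≤ ε := by
    intro x
    constructor
    · rintro ⟨y, hy, rfl⟩
      rw [Metric.mem_closedBall, dist_zero_right] at hy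
      rw [norm2_eq_euclid]
      simpa [he] using hy
    · intro hx
      refine ⟨e.symm x, ?_, by simp⟩
      rw [Metric.mem_closedBall, dist_zero_right]
      rw [norm2_eq_euclid] at hx
      exact hx
  have hAc : IsCompact A := isCompact_closedBall 0 lam
  have hAconv : Convex ℝ A := convex_closedBall 0 lam
  have hBc : IsCompact B := (isCompact_closedBall 0 ε).image e.continuous
  have hBconv : Convex ℝ B :=
    (convex_closedBall (0 : EuclideanSpace ℝ (Fin n)) ε).linear_image
      (e : EuclideanSpace ℝ (Fin n) →ₗ[ℝ] (Fin n → ℝ))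
  set C : Set (Fin n → ℝ) := A + B with hC
  have hCc : IsCompact C := hAc.add hBc
  have hCconv : Convex ℝ C := hAconv.add hBconv
  have hcnot : c ∉ C := by
    intro hcC
    rcases Set.mem_add.1 hcC with ⟨v, hv, r, hr, hvr⟩
    apply hinfeas
    refine ⟨v, r, ?_, (hBmem r).1 hr, hvr.symm⟩
    apply Real.iSup_le _ hlam
    intro i
    have h1 : ‖v i‖ ≤ ‖v‖ := norm_le_pi_norm v i
    have h2 : ‖v‖ ≤ lam := by
      rw [hA, Metric.mem_closedBall, dist_zero_right] at hv
      exact hv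
    exact le_trans h1 h2
  obtain ⟨f, s, hfs, hsc⟩ := geometric_hahn_banach_closed_point hCconv hCc.isClosed hcnot
  set w : Fin n → ℝ := fun i => f (fun j => if i = j then 1 else 0) with hw
  have hfx : ∀ x : Fin n → ℝ, f x = x ⬝ᵥ w := by
    intro x
    conv_lhs => rw [pi_eq_sum_univ x]
    rw [map_sum, dotProduct]
    apply Finset.sum_congr rfl
    intro i _
    rw [f.map_smul]
    simp [hw, smul_eq_mul]
  -- the zero vector is in C
  have h0C : (0 : Fin n → ℝ) ∈ C := by
    refine Set.mem_add.2 ⟨0, ?_, 0, ?_, by simp⟩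
    · simpa [hA] using hlam
    · rw [hBmem]
      have h02 : norm2 (0 : Fin n → ℝ) = 0 := by
        unfold norm2
        simp
      rw [h02]
      exact hε
  have hwne : w ≠ 0 := by
    intro hw0
    have h1 : f 0 < s := hfs 0 h0C
    have h2 : s < f c := hsc
    rw [hfx] at h2
    rw [hw0] at h2
    simp at h1 h2
    linarith
  have hs2pos : 0 < norm2 w := by
    rcases lt_or_eq_of_le (norm2_nonneg w) with h | h
    · exact h
    · exfalso
      apply hwne
      funext i
      have hsum : ∑ j, w j ^ 2 = 0 := by
        have := h.symm
        unfold norm2 at this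
        have hnn : 0 ≤ ∑ j, w j ^ 2 := Finset.sum_nonneg fun j _ => sq_nonneg _
        nlinarith [Real.sq_sqrt hnn]
      have : w i ^ 2 = 0 := by
        have := (Finset.sum_eq_zero_iff_of_nonneg (fun j _ => sq_nonneg (w j))).1 hsum i (Finset.mem_univ i)
        exact this
      simpa using pow_eq_zero_iff (n := 2) (by norm_num) |>.1 this
  -- construct the maximizing point a ∈ C
  set v : Fin n → ℝ := fun i => lam * (if w i < 0 then -1 else 1) with hv
  set r : Fin n → ℝ := (ε / norm2 w) • w with hr
  have hvA : v ∈ A := by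
    rw [hA, Metric.mem_closedBall, dist_zero_right]
    rw [pi_norm_le_iff_of_nonneg hlam]
    intro i
    rw [hv]
    simp only [Real.norm_eq_abs]
    rcases lt_or_ge (w i) 0 with h | h
    · simp [h, abs_mul, abs_of_nonneg hlam]
    · simp [not_lt.2 h, abs_mul, abs_of_nonneg hlam]
  have hrB : r ∈ B := by
    rw [hBmem, hr, norm2_smul', abs_of_nonneg (div_nonneg hε (norm2_nonneg w)),
      div_mul_cancel₀ _ (ne_of_gt hs2pos)]
  have haC : v + r ∈ C := Set.mem_add.2 ⟨v, hvA, r, hrB, rfl⟩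
  have hvw : v ⬝ᵥ w = lam * norm1 w := by
    rw [dotProduct, norm1, Finset.mul_sum]
    apply Finset.sum_congr rfl
    intro i _
    rw [hv]
    rcases lt_or_ge (w i) 0 with h | h
    · simp [h, abs_of_neg h]
    · simp [not_lt.2 h, abs_of_nonneg h]

  have hrw : r ⬝ᵥ w = ε * norm2 w := by
    rw [hr]
    have : ((ε / norm2 w) • w) ⬝ᵥ w = (ε / norm2 w) * (w ⬝ᵥ w) := by
      simp [dotProduct, Finset.mul_sum, mul_assoc]
    rw [this]
    have hww : w ⬝ᵥ w = norm2 w * norm2 w := by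
      rw [dotProduct]
      have hnn : 0 ≤ ∑ j, w j ^ 2 := Finset.sum_nonneg fun j _ => sq_nonneg _
      have := Real.mul_self_sqrt hnn
      unfold norm2
      rw [this]
      apply Finset.sum_congr rfl
      intro i _
      ring
    rw [hww]
    field_simp
  have hkey : ε * norm2 w + lam * norm1 w < c ⬝ᵥ w := by
    have h1 : f (v + r) < s := hfs _ haC
    have h2 : s < f c := hsc
    rw [hfx] at h1 h2
    rw [add_dotProduct, hvw, hrw] at h1
    linarith
  set δ : ℝ := c ⬝ᵥ w - (ε * norm2 w + lam * norm1 w) with hδ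
  have hδpos : 0 < δ := by rw [hδ]; linarith
  set t : ℝ := (|M| + 1) / δ with ht
  have htpos : 0 < t := div_pos (by positivity) hδpos
  refine ⟨t • w, ?_⟩
  rw [norm2_smul', norm1_smul', abs_of_pos htpos]
  have hdot : c ⬝ᵥ (t • w) = t * (c ⬝ᵥ w) := by
    rw [dotProduct, dotProduct, Finset.mul_sum]
    apply Finset.sum_congr rfl
    intro i _
    simp only [Pi.smul_apply, smul_eq_mul]
    ring
  rw [hdot]
  have : ε * (t * norm2 w) + lam * (t * norm1 w) - t * (c ⬝ᵥ w) = -(t * δ) := by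
    rw [hδ]; ring
  rw [this, ht, div_mul_cancel₀ _ (ne_of_gt hδpos)]
  have : -|M| ≤ M := neg_abs_le M
  linarith
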